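/- Mechanism 1 is not strongly group strategyproof: for every even n ≥ 4 and every d > 0, there exist a location profile x ∈ ℝⁿ, a nonempty set S ⊆ {1,…,n}, and a misreport x'_S ∈ ℝ^{|S|} such that c(xᵢ, f₁(x'_S, x₋_S)) ≤ c(xᵢ, f₁(x)) for all i ∈ S and c(xⱼ, f₁(x'_S, x₋_S)) < c(xⱼ, f₁(x)) for some j ∈ S, where f₁ denotes Mechanism 1. -/
import Mathlib


open MeasureTheory

noncomputable section

/-- Shrink map: collapse interval [a,b] to the point a. -/
def shrink (a b t : ℝ) : ℝ :=
  if t ≤ a then t else if t ≤ b then a else t - (b - a)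

/-- Cost of an agent at ideal location `t` under range `(a,b)`. -/
def cost (t a b : ℝ) : ℝ := |shrink a b t - shrink a b 0|

/-- Social cost. -/
def SC (n : ℕ) (x : Fin n → ℝ) (a b : ℝ) : ℝ := ∑ i, cost (x i) a b

/-- Maximum cost. -/
def MC (n : ℕ) (x : Fin n → ℝ) (a b : ℝ) : ℝ :=
  sSup (Set.range fun i => cost (x i) a b)

/-- Optimal social cost over feasible ranges. -/
def OPTSC (n : ℕ) (d : ℝ) (x : Fin n → ℝ) : ℝ :=
  sInf {v : ℝ | ∃ a b : ℝ, a ≤ b ∧ b - a ≤ d ∧ v = SC n x a b}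

/-- Optimal maximum cost over feasible ranges. -/
def OPTMC (n : ℕ) (d : ℝ) (x : Fin n → ℝ) : ℝ :=
  sInf {v : ℝ | ∃ a b : ℝ, a ≤ b ∧ b - a ≤ d ∧ v = MC n x a b}

open Classical in
/-- The set D(x) used by Mechanism 1. -/
def Dset (n : ℕ) (d : ℝ) (x : Fin n → ℝ) : Set ℝ :=
  {y : ℝ | (Finset.univ.filter fun i => y + d ≤ x i).card ≤
           (Finset.univ.filter fun i => x i ≤ y).card}

/-- Mechanism 1. -/
def mech1 (n : ℕ) (d : ℝ) (x : Fin n → ℝ) : ℝ × ℝ :=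
  if 0 ≤ sInf (Dset n d x) then (0, d)
  else if sInf (Dset n d x) ≤ -d then (-d, 0)
  else (sInf (Dset n d x), sInf (Dset n d x) + d)

/-- Leftmost agent location. -/
def xleft (n : ℕ) (x : Fin n → ℝ) : ℝ := sInf (Set.range x)

/-- Rightmost agent location. -/
def xright (n : ℕ) (x : Fin n → ℝ) : ℝ := sSup (Set.range x)

/-- Mechanism 2. -/
def mech2 (n : ℕ) (d : ℝ) (x : Fin n → ℝ) : ℝ × ℝ :=
  if 0 ≤ xleft n x then (0, d)
  else if xleft n x ≤ -d then (-d, 0)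
  else (xleft n x, xleft n x + d)

/-- Mechanism 3. -/
def mech3 (n : ℕ) (d : ℝ) (x : Fin n → ℝ) : ℝ × ℝ :=
  (min (xleft n x) 0, min (xleft n x) 0 + d)

/-- The profile where agents in `S` report `x'` and all others report `x`. -/
def misreport (n : ℕ) (S : Finset (Fin n)) (x x' : Fin n → ℝ) : Fin n → ℝ :=
  fun j => if j ∈ S then x' j else x j

lemma cost_zero' (a b t : ℝ) (h1 : a ≤ t) (h2 : t ≤ b) (h3 : a ≤ 0) (h4 : 0 ≤ b) :
    cost t a b = 0 := by
  unfold cost shrink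
  rw [abs_eq_zero]
  split_ifs <;> linarith

lemma cost_half (d : ℝ) (hd : 0 < d) : cost (-(d/2)) 0 d = d/2 := by
  unfold cost shrink
  rw [if_pos (by linarith : -(d/2) ≤ (0:ℝ)), if_pos (le_refl (0:ℝ))]
  rw [abs_of_nonpos (by linarith)]
  ring

theorem stmt4 (n : ℕ) (hn : 4 ≤ n) (heven : Even n) (d : ℝ) (hd : 0 < d) :
    ∃ (x : Fin n → ℝ) (S : Finset (Fin n)) (x' : Fin n → ℝ), S.Nonempty ∧
      (∀ i ∈ S,
        cost (x i) (mech1 n d (misreport n S x x')).1 (mech1 n d (misreport n S x x')).2 ≤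
          cost (x i) (mech1 n d x).1 (mech1 n d x).2) ∧
      (∃ j ∈ S,
        cost (x j) (mech1 n d (misreport n S x x')).1 (mech1 n d (misreport n S x x')).2 <
          cost (x j) (mech1 n d x).1 (mech1 n d x).2) := by

  classical
  have h0n : 0 < n := by omega
  have h1n : 1 < n := by omega
  have h2n : 2 < n := by omega
  have h3n : 3 < n := by omega
  set x : Fin n → ℝ := fun i => if i.val = 0 then -(d/2) else if i.val ≤ 2 then d else 0 with hx
  set x' : Fin n → ℝ := fun i => if i.val = 0 then -(d/2) else if i.val ≤ 2 then d else -(2*d) with hx'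
  set S : Finset (Fin n) := Finset.univ.filter (fun i => i.val ≠ 1 ∧ i.val ≠ 2) with hS
  have hmemS : ∀ i : Fin n, i ∈ S ↔ (i.val ≠ 1 ∧ i.val ≠ 2) := by
    intro i; simp [hS]
  -- misreport equals x'
  have hmis : misreport n S x x' = x' := by
    funext i
    by_cases h : i ∈ S
    · simp [misreport, h]
    · simp only [misreport, if_neg h]
      have h' : ¬(i.val ≠ 1 ∧ i.val ≠ 2) := fun hc => h ((hmemS i).mpr hc)
      push_neg at h'
      by_cases h1 : i.val = 1
      · simp [hx, hx', h1]
      · have h2 : i.val = 2 := h' h1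
        simp [hx, hx', h2]
  -- truthful mechanism outputs (0, d)
  have hDx : ∀ y ∈ Dset n d x, 0 ≤ y := by
    intro y hy
    by_contra hy0
    push_neg at hy0
    simp only [Dset, Set.mem_setOf_eq] at hy
    have h1 : (Finset.univ.filter fun i => x i ≤ y).card ≤ 1 := by
      have hsub : (Finset.univ.filter fun i => x i ≤ y) ⊆ {(⟨0, h0n⟩ : Fin n)} := by
        intro i hi
        rw [Finset.mem_filter] at hi
        rw [Finset.mem_singleton]
        by_contra hne
        have hv : i.val ≠ 0 := by
          intro h; exact hne (Fin.ext h)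
        have hxi := hi.2
        simp only [hx] at hxi
        simp only [if_neg hv] at hxi
        by_cases h2 : i.val ≤ 2
        · rw [if_pos h2] at hxi; linarith
        · rw [if_neg h2] at hxi; linarith
      calc (Finset.univ.filter fun i => x i ≤ y).card
          ≤ ({(⟨0, h0n⟩ : Fin n)} : Finset (Fin n)).card := Finset.card_le_card hsub
        _ = 1 := Finset.card_singleton _
    have h2 : 2 ≤ (Finset.univ.filter fun i => y + d ≤ x i).card := by
      have hsub : ({(⟨1, h1n⟩ : Fin n), (⟨2, h2n⟩ : Fin n)} : Finset (Fin n)) ⊆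
          (Finset.univ.filter fun i => y + d ≤ x i) := by
        intro i hi
        rw [Finset.mem_insert, Finset.mem_singleton] at hi
        rw [Finset.mem_filter]
        refine ⟨Finset.mem_univ _, ?_⟩
        rcases hi with h | h
        · rw [h]; simp only [hx]; norm_num; linarith
        · rw [h]; simp only [hx]; norm_num; linarith
      have hne : (⟨1, h1n⟩ : Fin n) ≠ (⟨2, h2n⟩ : Fin n) := by
        intro h; exact absurd (Fin.val_eq_of_eq h) (by norm_num)
      calc (2:ℕ) = ({(⟨1, h1n⟩ : Fin n), (⟨2, h2n⟩ : Fin n)} : Finset (Fin n)).card :=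
            (Finset.card_pair hne).symm
        _ ≤ _ := Finset.card_le_card hsub
    omega
  have hl0 : 0 ≤ sInf (Dset n d x) := Real.sInf_nonneg hDx
  have hm1 : mech1 n d x = (0, d) := by unfold mech1; rw [if_pos hl0]
  -- misreport mechanism
  have hbdd : BddBelow (Dset n d x') := by
    refine ⟨-(3*d), fun y hy => ?_⟩
    by_contra hcon
    push_neg at hcon
    simp only [Dset, Set.mem_setOf_eq] at hy
    have hz : (Finset.univ.filter fun i => x' i ≤ y) = ∅ := by
      apply Finset.filter_false_of_mem
      intro i _
      simp only [hx']
      by_cases h0 : i.val = 0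
      · rw [if_pos h0]; push_neg; linarith
      · rw [if_neg h0]
        by_cases h2 : i.val ≤ 2
        · rw [if_pos h2]; push_neg; linarith
        · rw [if_neg h2]; push_neg; linarith
    have h3mem : (⟨3, h3n⟩ : Fin n) ∈ (Finset.univ.filter fun i => y + d ≤ x' i) := by
      rw [Finset.mem_filter]
      refine ⟨Finset.mem_univ _, ?_⟩
      simp only [hx']; norm_num; linarith
    have hpos := Finset.card_pos.mpr ⟨_, h3mem⟩
    rw [hz] at hy
    simp only [Finset.card_empty, Nat.le_zero] at hy
    omega
  have hmem : -(d/2) ∈ Dset n d x' := by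
    simp only [Dset, Set.mem_setOf_eq]
    have hL : (Finset.univ.filter fun i => -(d/2) + d ≤ x' i).card ≤ 2 := by
      have hsub : (Finset.univ.filter fun i => -(d/2) + d ≤ x' i) ⊆
          ({(⟨1, h1n⟩ : Fin n), (⟨2, h2n⟩ : Fin n)} : Finset (Fin n)) := by
        intro i hi
        rw [Finset.mem_filter] at hi
        rw [Finset.mem_insert, Finset.mem_singleton]
        have hxi := hi.2
        simp only [hx'] at hxi
        by_cases h0 : i.val = 0
        · rw [if_pos h0] at hxi; linarith
        · by_cases h2 : i.val ≤ 2
          · have : i.val = 1 ∨ i.val = 2 := by omega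
            rcases this with h | h
            · left; exact Fin.ext h
            · right; exact Fin.ext h
          · rw [if_neg h0, if_neg h2] at hxi; linarith
      have hne : (⟨1, h1n⟩ : Fin n) ≠ (⟨2, h2n⟩ : Fin n) := by
        intro h; exact absurd (Fin.val_eq_of_eq h) (by norm_num)
      calc (Finset.univ.filter fun i => -(d/2) + d ≤ x' i).card
          ≤ _ := Finset.card_le_card hsub
        _ = 2 := Finset.card_pair hne
    have hR : 2 ≤ (Finset.univ.filter fun i => x' i ≤ -(d/2)).card := by
      have hsub : ({(⟨0, h0n⟩ : Fin n), (⟨3, h3n⟩ : Fin n)} : Finset (Fin n)) ⊆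
          (Finset.univ.filter fun i => x' i ≤ -(d/2)) := by
        intro i hi
        rw [Finset.mem_insert, Finset.mem_singleton] at hi
        rw [Finset.mem_filter]
        refine ⟨Finset.mem_univ _, ?_⟩
        rcases hi with h | h
        · rw [h]; simp only [hx']; norm_num
        · rw [h]; simp only [hx']; norm_num; linarith
      have hne : (⟨0, h0n⟩ : Fin n) ≠ (⟨3, h3n⟩ : Fin n) := by
        intro h; exact absurd (Fin.val_eq_of_eq h) (by norm_num)
      calc (2:ℕ) = ({(⟨0, h0n⟩ : Fin n), (⟨3, h3n⟩ : Fin n)} : Finset (Fin n)).card :=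
            (Finset.card_pair hne).symm
        _ ≤ _ := Finset.card_le_card hsub
    omega
  have hle : sInf (Dset n d x') ≤ -(d/2) := csInf_le hbdd hmem
  have hout : ∃ a : ℝ, mech1 n d x' = (a, a + d) ∧ -d ≤ a ∧ a ≤ -(d/2) := by
    unfold mech1
    split_ifs with h1 h2
    · linarith
    · exact ⟨-d, by norm_num, le_refl _, by linarith⟩
    · push_neg at h1 h2
      exact ⟨sInf (Dset n d x'), rfl, by linarith, hle⟩
  obtain ⟨a, hma, ha1, ha2⟩ := hout
  have hcost0 : ∀ i : Fin n, i ∈ S → cost (x i) a (a + d) = 0 := by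
    intro i hi
    rw [hmemS] at hi
    by_cases h0 : i.val = 0
    · have : x i = -(d/2) := by simp [hx, h0]
      rw [this]
      exact cost_zero' _ _ _ ha2 (by linarith) (by linarith) (by linarith)
    · have h2 : ¬ i.val ≤ 2 := by omega
      have : x i = 0 := by simp [hx, h0, h2]
      rw [this]
      exact cost_zero' _ _ _ (by linarith) (by linarith) (by linarith) (by linarith)
  refine ⟨x, S, x', ⟨⟨0, h0n⟩, by rw [hmemS]; simp⟩, ?_, ?_⟩
  · intro i hi
    rw [hmis, hma, hm1]
    rw [hcost0 i hi]
    exact abs_nonneg _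
  · refine ⟨⟨0, h0n⟩, by rw [hmemS]; simp, ?_⟩
    rw [hmis, hma, hm1]
    rw [hcost0 _ (by rw [hmemS]; simp)]
    have hx0 : x ⟨0, h0n⟩ = -(d/2) := by simp [hx]
    rw [hx0]
    simp only [cost_half d hd]
    linarith
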